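/- arXiv:2201.00749 — 3 statements merged into one kernel-verified Lean document; each statement's English description precedes it below -/
import Mathlib

section
/- Let p, q be non-negative integers and r a positive integer with max{p,q} ≥ 1, and suppose f(z) = z^3 - p z^2 + q z + r has a non-real complex root λ. Then |λ| is strictly greater than the absolute value of the real root of f; i.e., if -α denotes the real root (with α > 0), then α < |λ|. -/
/-- If `max p q ≥ 1` and `λ` is a non-real root of `z³ - p z² + q z + r`, then
its modulus strictly exceeds the positive number `α` with real root `-α`. -/
theorem stmt1 (p q r : ℕ) (hr : 1 ≤ r) (hpq : 1 ≤ max p q)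
    (l : ℂ) (hl : l.im ≠ 0)
    (hroot : l ^ 3 - (p : ℂ) * l ^ 2 + (q : ℂ) * l + (r : ℂ) = 0)
    (α : ℝ) (hα : 0 < α)
    (hαroot : (-α) ^ 3 - (p : ℝ) * (-α) ^ 2 + (q : ℝ) * (-α) + (r : ℝ) = 0) :
    α < ‖l‖ := by
  have hαC : (-(α:ℂ)) ^ 3 - (p : ℂ) * (-(α:ℂ)) ^ 2 + (q : ℂ) * (-(α:ℂ)) + (r : ℂ) = 0 := by
    exact_mod_cast congrArg (Complex.ofReal) hαroot
  -- factor out (l + α)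
  have h1 : (l + (α:ℂ)) * (l ^ 2 - ((α:ℂ) + p) * l + ((α:ℂ)^2 + p * α + q)) = 0 := by
    linear_combination hroot - hαC
  have hla : l + (α:ℂ) ≠ 0 := by
    intro h
    apply hl
    have := congrArg Complex.im h
    simpa using this
  have hq2 : l ^ 2 - ((α:ℂ) + p) * l + ((α:ℂ)^2 + p * α + q) = 0 :=
    (mul_eq_zero.mp h1).resolve_left hla
  set c := (starRingEnd ℂ) l with hc
  have hq2c : c ^ 2 - ((α:ℂ) + p) * c + ((α:ℂ)^2 + p * α + q) = 0 := by
    have := congrArg (starRingEnd ℂ) hq2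
    simpa using this
  have hne : l - c ≠ 0 := by
    intro h
    apply hl
    have := congrArg Complex.im h
    simp [hc, Complex.sub_im, Complex.conj_im] at this
    linarith
  have hsum : l + c = (α:ℂ) + p := by
    have h3 : (l - c) * (l + c - ((α:ℂ) + p)) = 0 := by
      linear_combination hq2 - hq2c
    have := (mul_eq_zero.mp h3).resolve_left hne
    linear_combination this
  have hm : l * c = (α:ℂ)^2 + p * α + q := by
    linear_combination -hq2 + l * hsum
  have hmr : Complex.normSq l = α^2 + p * α + q := by
    have : ((Complex.normSq l : ℝ) : ℂ) = ((α^2 + p * α + q : ℝ) : ℂ) := by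
      rw [← Complex.mul_conj]
      push_cast
      linear_combination hm
    exact_mod_cast this
  have habs : ‖l‖ ^ 2 = α^2 + p * α + q := by
    rw [Complex.sq_norm, hmr]
  have hpos : 0 < (p : ℝ) * α + q := by
    rcases le_max_iff.mp hpq with h | h
    · have : (1:ℝ) ≤ p := by exact_mod_cast h
      nlinarith
    · have : (1:ℝ) ≤ q := by exact_mod_cast h
      nlinarith
  have : α ^ 2 < ‖l‖ ^ 2 := by rw [habs]; nlinarith
  exact lt_of_pow_lt_pow_left₀ 2 (norm_nonneg l) this
end

section
/- Let λ be a complex root of f(z) = z^3 - p z^2 + q z + r (p, q ≥ 0, r ≥ 1 integers). Then |λ|^2 is a root of the characteristic polynomial x^3 - q x^2 - p r x - r^2 of the matrix [[0,0,r],[1,q,p],[0,r,0]], provided conj(λ) is also a root of f (i.e., λ is non-real). -/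
/-- If `λ` is a non-real root of `z³ - p z² + q z + r`, then `|λ|²` is a root of
`x³ - q x² - p r x - r²`, the characteristic polynomial of `[[0,0,r],[1,q,p],[0,r,0]]`. -/
theorem stmt10 (p q r : ℕ) (hr : 1 ≤ r) (l : ℂ) (hl : l.im ≠ 0)
    (hroot : l ^ 3 - (p : ℂ) * l ^ 2 + (q : ℂ) * l + (r : ℂ) = 0) :
    (‖l‖ ^ 2) ^ 3 - (q : ℝ) * (‖l‖ ^ 2) ^ 2
      - (p : ℝ) * (r : ℝ) * (‖l‖ ^ 2) - (r : ℝ) ^ 2 = 0 := by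
  set x := l.re with hx
  set y := l.im with hy
  have hre := congrArg Complex.re hroot
  have him := congrArg Complex.im hroot
  simp [Complex.add_re, Complex.sub_re, Complex.mul_re, Complex.mul_im,
    pow_succ, Complex.add_im, Complex.sub_im, Complex.one_re, Complex.one_im] at hre him
  -- hre, him are real equations in x, y
  have h1 : x^3 - 3*x*y^2 - (p:ℝ)*(x^2 - y^2) + (q:ℝ)*x + (r:ℝ) = 0 := by
    linear_combination hre
  have h2 : 3*x^2 - y^2 - 2*(p:ℝ)*x + (q:ℝ) = 0 := by
    have h2' : y * (3*x^2 - y^2 - 2*(p:ℝ)*x + (q:ℝ)) = 0 := by linear_combination him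
    rcases mul_eq_zero.mp h2' with h | h
    · exact absurd h hl
    · exact h
  have habs : ‖l‖ ^ 2 = x^2 + y^2 := by
    rw [Complex.sq_norm, Complex.normSq_apply]; ring
  rw [habs]
  set a : ℝ := x^2 + y^2
  set r0 : ℝ := a * (2*x - p)
  linear_combination (-(((r:ℝ) + r0 + (p:ℝ)*a))) * h1 + (-a^2 + x*((r:ℝ) + r0 + (p:ℝ)*a)) * h2
end

section
/- Let M be an s×s integer matrix all of whose eigenvalues have absolute value > 1, let L be a d×s real matrix of rank d, and let λ ∈ ℝ^d, v ∈ ℤ^s. If ⟨(Mᵀ)^n (Lᵀ λ), v⟩ → 0 mod 1 as n → ∞ with exponentially fast convergence, then there exists n₀ such that ⟨(Mᵀ)^n (Lᵀ λ), v⟩ ∈ ℤ for all n ≥ n₀. -/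
open Polynomial Matrix Finset

noncomputable def shiftE : Module.End ℂ (ℕ → ℂ) := LinearMap.funLeft ℂ ℂ (· + 1)

lemma shiftE_apply (f : ℕ → ℂ) (n : ℕ) : shiftE f n = f (n + 1) := rfl

lemma shiftE_pow (k : ℕ) (f : ℕ → ℂ) (n : ℕ) : (shiftE ^ k) f n = f (n + k) := by
  induction k generalizing f n with
  | zero => rfl
  | succ k ih =>
    rw [pow_succ, Module.End.mul_apply, ih, shiftE_apply]
    congr 1

lemma aeval_shiftE_apply (q : ℂ[X]) (f : ℕ → ℂ) (n : ℕ) :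
    (Polynomial.aeval shiftE q) f n = ∑ j ∈ Finset.range (q.natDegree + 1), q.coeff j * f (n + j) := by
  rw [Polynomial.aeval_eq_sum_range]
  simp [LinearMap.sum_apply, shiftE_pow]

def ExpDecay (f : ℕ → ℂ) : Prop :=
  ∃ C : ℝ, 0 < C ∧ ∃ c : ℝ, c ∈ Set.Ioo (0:ℝ) 1 ∧ ∀ n, ‖f n‖ ≤ C * c ^ n

lemma stepE_apply (μ : ℂ) (f : ℕ → ℂ) (n : ℕ) :
    (shiftE - μ • (1 : Module.End ℂ (ℕ → ℂ))) f n = f (n + 1) - μ * f n := by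
  simp [shiftE_apply]

lemma ExpDecay.step (μ : ℂ) {f : ℕ → ℂ} (h : ExpDecay f) :
    ExpDecay ((shiftE - μ • (1 : Module.End ℂ (ℕ → ℂ))) f) := by
  obtain ⟨C, hC, c, hc, hf⟩ := h
  refine ⟨C * (1 + ‖μ‖), by positivity, c, hc, fun n => ?_⟩
  rw [stepE_apply]
  calc ‖f (n + 1) - μ * f n‖
      ≤ ‖f (n+1)‖ + ‖μ‖ * ‖f n‖ := by
        simpa [norm_mul] using norm_sub_le (f (n+1)) (μ * f n)
    _ ≤ C * c ^ (n+1) + ‖μ‖ * (C * c ^ n) := by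
        have h0 : (0:ℝ) ≤ ‖μ‖ := norm_nonneg _
        nlinarith [hf (n+1), hf n]
    _ ≤ C * (1 + ‖μ‖) * c ^ n := by
        have h0 : (0:ℝ) ≤ ‖μ‖ := norm_nonneg _
        have hc1 : c ^ (n+1) ≤ c ^ n := by
          calc c ^ (n+1) = c * c ^ n := by ring
          _ ≤ 1 * c ^ n := mul_le_mul_of_nonneg_right hc.2.le (pow_nonneg hc.1.le n)
          _ = c ^ n := by ring
        nlinarith [pow_nonneg hc.1.le n]

lemma ExpDecay.prodL (R : List ℂ) {f : ℕ → ℂ} (h : ExpDecay f) :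
    ExpDecay ((R.map (fun μ => shiftE - μ • (1 : Module.End ℂ (ℕ → ℂ)))).prod f) := by
  induction R generalizing f with
  | nil => simpa using h
  | cons μ R ih =>
    rw [List.map_cons, List.prod_cons, Module.End.mul_apply]
    exact (ih h).step μ

lemma geom_root_zero {μ : ℂ} (hμ : 1 < ‖μ‖) {g : ℕ → ℂ} (hg : ExpDecay g)
    {N : ℕ} (h : ∀ n ≥ N, g (n + 1) = μ * g n) : ∀ n ≥ N, g n = 0 := by
  intro n hn
  obtain ⟨C, hC, c, hc, hgb⟩ := hg
  have key : ∀ m : ℕ, g (n + m) = μ ^ m * g n := by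
    intro m
    induction m with
    | zero => simp
    | succ m ih =>
      have hnm : n + (m + 1) = (n + m) + 1 := by ring
      rw [hnm, h (n + m) (le_trans hn (Nat.le_add_right n m)), ih]; ring
  by_contra hne
  have hgn : 0 < ‖g n‖ := by
    exact norm_pos_iff.mpr hne
  obtain ⟨m, hm⟩ := pow_unbounded_of_one_lt (C * c ^ n / ‖g n‖) hμ
  have h1 : ‖μ‖ ^ m * ‖g n‖ ≤ C * c ^ (n + m) := by
    have := hgb (n + m)
    rw [key m] at this
    simpa [norm_mul, norm_pow] using this
  have h2 : c ^ (n + m) ≤ c ^ n := by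
    apply pow_le_pow_of_le_one hc.1.le hc.2.le (Nat.le_add_right n m)
  have h3 : C * c ^ n < ‖μ‖ ^ m * ‖g n‖ := by
    rw [div_lt_iff₀ hgn] at hm
    exact hm
  nlinarith

lemma list_root_zero (R : List ℂ) (hR : ∀ μ ∈ R, 1 < ‖μ‖) :
    ∀ f : ℕ → ℂ, ExpDecay f → ∀ N : ℕ,
      (∀ n ≥ N, ((R.map (fun μ => shiftE - μ • (1 : Module.End ℂ (ℕ → ℂ)))).prod f) n = 0) →
      ∀ n ≥ N, f n = 0 := by
  induction R with
  | nil => intro f _ N h n hn; simpa using h n hn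
  | cons μ R ih =>
    intro f hf N h n hn
    set g := (R.map (fun μ => shiftE - μ • (1 : Module.End ℂ (ℕ → ℂ)))).prod f with hgdef
    have hg : ExpDecay g := hf.prodL R
    have hgeom : ∀ m ≥ N, g (m + 1) = μ * g m := by
      intro m hm
      have := h m hm
      rw [List.map_cons, List.prod_cons, Module.End.mul_apply, stepE_apply] at this
      linear_combination this
    have hg0 : ∀ m ≥ N, g m = 0 := geom_root_zero (hR μ (List.mem_cons_self)) hg hgeom
    exact ih (fun ν hν => hR ν (List.mem_cons_of_mem μ hν)) f hf N hg0 n hn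



open Polynomial Matrix Finset

lemma charpoly_transpose' {n : Type*} [DecidableEq n] [Fintype n] {R : Type*} [CommRing R]
    (M : Matrix n n R) : M.transpose.charpoly = M.charpoly := by
  rw [Matrix.charpoly, Matrix.charpoly, ← Matrix.det_transpose (charmatrix M)]
  congr 1
  ext i j
  by_cases h : i = j
  · subst h; simp [Matrix.charmatrix_apply, Matrix.transpose_apply]
  · simp [Matrix.charmatrix_apply, Matrix.transpose_apply, Matrix.diagonal_apply, h,
      Ne.symm h]

/-- If all eigenvalues of the integer matrix `M` have modulus `> 1`, `L` is a real
`d × s` matrix of rank `d`, and `xₙ = ⟨(Mᵀ)ⁿ(Lᵀλ), v⟩` tends to `0` mod `1`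
exponentially fast, then `xₙ` is an integer for all large `n`. -/
theorem stmt19 (s d : ℕ) (M : Matrix (Fin s) (Fin s) ℤ)
    (heig : ∀ μ : ℂ, ((M.map (Int.cast : ℤ → ℂ)).charpoly).IsRoot μ → 1 < ‖μ‖)
    (L : Matrix (Fin d) (Fin s) ℝ) (hrank : L.rank = d)
    (lam : Fin d → ℝ) (v : Fin s → ℤ)
    (x : ℕ → ℝ)
    (hx : ∀ n, x n = ∑ i, ((M.transpose.map (Int.cast : ℤ → ℝ)) ^ n).mulVec
        (L.transpose.mulVec lam) i * (v i : ℝ))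
    (hconv : ∃ C : ℝ, 0 < C ∧ ∃ c : ℝ, c ∈ Set.Ioo (0 : ℝ) 1 ∧
      ∀ n : ℕ, (⨅ k : ℤ, |x n - (k : ℝ)|) ≤ C * c ^ n) :
    ∃ n₀ : ℕ, ∀ n ≥ n₀, ∃ k : ℤ, x n = (k : ℝ) := by
  classical
  obtain ⟨C, hC, c, hc, hconv'⟩ := hconv
  set a := M.charpoly with ha
  set A := (M.transpose.map (Int.cast : ℤ → ℝ)) with hA
  set w := L.transpose.mulVec lam with hw
  have hAcp : A.charpoly = a.map (Int.castRingHom ℝ) := by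
    rw [hA, show (Int.cast : ℤ → ℝ) = ⇑(Int.castRingHom ℝ) from rfl,
      Matrix.charpoly_map, charpoly_transpose']
  have hadeg : a.natDegree = s := by
    have h := M.charpoly_natDegree_eq_dim
    rwa [Fintype.card_fin] at h
  -- Step A : integer linear recurrence for x
  have hrec : ∀ n : ℕ, ∑ j ∈ Finset.range (s+1), (a.coeff j : ℝ) * x (n + j) = 0 := by
    intro n
    have hCH : (∑ j ∈ Finset.range (s+1), (a.coeff j : ℝ) • (A ^ (n + j))) = 0 := by
      have h1 : (Polynomial.aeval A) A.charpoly = 0 := Matrix.aeval_self_charpoly A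
      have hdeg : A.charpoly.natDegree < s + 1 := by
        rw [show A.charpoly.natDegree = s by simpa using A.charpoly_natDegree_eq_dim]
        omega
      have h2 : (Polynomial.aeval A) A.charpoly
          = ∑ j ∈ Finset.range (s+1), (a.coeff j : ℝ) • A ^ j := by
        rw [Polynomial.aeval_eq_sum_range' hdeg]
        refine Finset.sum_congr rfl fun j _ => ?_
        rw [hAcp, Polynomial.coeff_map]
        norm_num
      calc ∑ j ∈ Finset.range (s+1), (a.coeff j : ℝ) • (A ^ (n + j))
          = A ^ n * ∑ j ∈ Finset.range (s+1), (a.coeff j : ℝ) • A ^ j := by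
            rw [Finset.mul_sum]
            refine Finset.sum_congr rfl fun j _ => ?_
            rw [mul_smul_comm, pow_add]
        _ = A ^ n * 0 := by rw [← h2, h1]
        _ = 0 := mul_zero _
    have hent : ∀ i k, ∑ j ∈ Finset.range (s+1), (a.coeff j : ℝ) * (A ^ (n + j)) i k = 0 := by
      intro i k
      have h := congrFun (congrFun hCH i) k
      simpa [Matrix.sum_apply, Matrix.smul_apply, smul_eq_mul] using h
    calc ∑ j ∈ Finset.range (s+1), (a.coeff j : ℝ) * x (n + j)
        = ∑ j ∈ Finset.range (s+1), ∑ i, ∑ k,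
            ((a.coeff j : ℝ) * (A ^ (n + j)) i k) * (w k * (v i : ℝ)) := by
          refine Finset.sum_congr rfl fun j _ => ?_
          rw [hx]
          rw [Finset.mul_sum]
          refine Finset.sum_congr rfl fun i _ => ?_
          simp only [Matrix.mulVec, dotProduct, Finset.sum_mul, Finset.mul_sum]
          refine Finset.sum_congr rfl fun k _ => ?_
          ring
      _ = ∑ i, ∑ k, (∑ j ∈ Finset.range (s+1), (a.coeff j : ℝ) * (A ^ (n + j)) i k)
            * (w k * (v i : ℝ)) := by
          rw [Finset.sum_comm]
          refine Finset.sum_congr rfl fun i _ => ?_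
          rw [Finset.sum_comm]
          refine Finset.sum_congr rfl fun k _ => ?_
          rw [Finset.sum_mul]
      _ = 0 := by simp [hent]
  -- Step B : the nearest-integer error is exponentially small
  have hround : ∀ n, |x n - (round (x n) : ℝ)| ≤ C * c ^ n := by
    intro n
    refine le_trans (le_ciInf fun k => ?_) (hconv' n)
    by_cases hk : k = round (x n)
    · rw [hk]
    · have h1 : |x n - (round (x n):ℝ)| ≤ 1/2 := abs_sub_round (x n)
      have h2 : (1:ℝ) ≤ |(k:ℝ) - (round (x n):ℝ)| := by
        have hz : (1:ℤ) ≤ |k - round (x n)| := Int.one_le_abs (sub_ne_zero.mpr hk)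
        calc (1:ℝ) = ((1:ℤ):ℝ) := by norm_num
          _ ≤ ((|k - round (x n)| : ℤ) : ℝ) := by exact_mod_cast hz
          _ = |(k:ℝ) - (round (x n):ℝ)| := by rw [Int.cast_abs]; push_cast; ring_nf
      have h3 : |(k:ℝ) - (round (x n):ℝ)|
          ≤ |x n - (round (x n):ℝ)| + |x n - (k:ℝ)| := by
        have := abs_sub (x n - (round (x n):ℝ)) (x n - (k:ℝ))
        have he : (x n - (round (x n):ℝ)) - (x n - (k:ℝ)) = (k:ℝ) - (round (x n):ℝ) := by
          ring
        rwa [he] at this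
      linarith
  -- Step C : the recurrence holds for the errors eventually
  set T := ∑ j ∈ Finset.range (s+1), |(a.coeff j : ℝ)| with hT
  obtain ⟨N, hN⟩ : ∃ N : ℕ, ∀ n ≥ N, T * C * c ^ n < 1 := by
    have htend : Filter.Tendsto (fun n : ℕ => T * C * c ^ n) Filter.atTop (nhds 0) := by
      simpa using (tendsto_pow_atTop_nhds_zero_of_lt_one hc.1.le hc.2).const_mul (T * C)
    have := htend.eventually (gt_mem_nhds one_pos)
    exact Filter.eventually_atTop.mp this
  have herec : ∀ n ≥ N, ∑ j ∈ Finset.range (s+1),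
      (a.coeff j : ℝ) * (x (n+j) - (round (x (n+j)) : ℝ)) = 0 := by
    intro n hn
    set K : ℤ := ∑ j ∈ Finset.range (s+1), a.coeff j * round (x (n+j)) with hK
    have hKr : (K:ℝ) = - ∑ j ∈ Finset.range (s+1),
        (a.coeff j : ℝ) * (x (n+j) - (round (x (n+j)) : ℝ)) := by
      have hsplit : ∑ j ∈ Finset.range (s+1),
          (a.coeff j : ℝ) * (x (n+j) - (round (x (n+j)) : ℝ))
          = (∑ j ∈ Finset.range (s+1), (a.coeff j : ℝ) * x (n+j))
            - ∑ j ∈ Finset.range (s+1), (a.coeff j : ℝ) * (round (x (n+j)) : ℝ) := by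
        rw [← Finset.sum_sub_distrib]
        refine Finset.sum_congr rfl fun j _ => by ring
      rw [hsplit, hrec n, hK]
      push_cast
      ring
    have hKb : |(K:ℝ)| ≤ T * C * c ^ n := by
      rw [hKr, abs_neg]
      calc |∑ j ∈ Finset.range (s+1),
              (a.coeff j : ℝ) * (x (n+j) - (round (x (n+j)) : ℝ))|
          ≤ ∑ j ∈ Finset.range (s+1),
              |(a.coeff j : ℝ) * (x (n+j) - (round (x (n+j)) : ℝ))| :=
            Finset.abs_sum_le_sum_abs _ _
        _ ≤ ∑ j ∈ Finset.range (s+1), |(a.coeff j : ℝ)| * (C * c ^ n) := by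
            refine Finset.sum_le_sum fun j _ => ?_
            rw [abs_mul]
            refine mul_le_mul_of_nonneg_left ?_ (abs_nonneg _)
            refine le_trans (hround (n+j)) ?_
            exact mul_le_mul_of_nonneg_left
              (pow_le_pow_of_le_one hc.1.le hc.2.le (Nat.le_add_right n j)) hC.le
        _ = T * (C * c ^ n) := by rw [hT, Finset.sum_mul]
        _ = T * C * c ^ n := by ring
    have hK0 : K = 0 := by
      have h1 : |(K:ℝ)| < 1 := lt_of_le_of_lt hKb (hN n hn)
      have h2 : |K| < 1 := by exact_mod_cast (by rwa [← Int.cast_abs] at h1 : ((|K|:ℤ):ℝ) < 1)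
      exact Int.abs_lt_one_iff.mp h2
    have := hKr
    rw [hK0] at this
    simp only [Int.cast_zero] at this
    linarith
  -- Step D : errors vanish eventually via the eigenvalue condition
  set pC := (M.map (Int.cast : ℤ → ℂ)).charpoly with hpC
  have hpCa : pC = a.map (Int.castRingHom ℂ) := by
    rw [hpC, show (Int.cast : ℤ → ℂ) = ⇑(Int.castRingHom ℂ) from rfl, Matrix.charpoly_map]
  have hpCdeg : pC.natDegree = s := by
    have h := (M.map (Int.cast : ℤ → ℂ)).charpoly_natDegree_eq_dim
    rwa [Fintype.card_fin] at h
  set f₀ : ℕ → ℂ := fun n => ((x n - (round (x n) : ℝ) : ℝ) : ℂ) with hf₀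
  have hdecay : ExpDecay f₀ := by
    refine ⟨C, hC, c, hc, fun n => ?_⟩
    show ‖((x n - (round (x n) : ℝ) : ℝ) : ℂ)‖ ≤ C * c ^ n
    rw [Complex.norm_real, Real.norm_eq_abs]
    exact hround n
  have hCrec : ∀ n ≥ N, (Polynomial.aeval shiftE pC) f₀ n = 0 := by
    intro n hn
    rw [aeval_shiftE_apply, hpCdeg]
    have h1 := herec n hn
    calc ∑ j ∈ Finset.range (s+1), pC.coeff j * f₀ (n + j)
        = ∑ j ∈ Finset.range (s+1),
            (((a.coeff j : ℝ) * (x (n+j) - (round (x (n+j)) : ℝ)) : ℝ) : ℂ) := by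
          refine Finset.sum_congr rfl fun j _ => ?_
          rw [hpCa, Polynomial.coeff_map]
          show ((a.coeff j : ℂ)) * (((x (n+j) - (round (x (n+j)) : ℝ) : ℝ)) : ℂ) = _
          push_cast
          ring
      _ = ((∑ j ∈ Finset.range (s+1),
            (a.coeff j : ℝ) * (x (n+j) - (round (x (n+j)) : ℝ)) : ℝ) : ℂ) := by
          rw [Complex.ofReal_sum]
      _ = 0 := by rw [h1]; norm_num
  have hmonic : pC.Monic := Matrix.charpoly_monic _
  have hfact : pC = (pC.roots.map (fun μ => X - Polynomial.C μ)).prod :=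
    (IsAlgClosed.splits pC).eq_prod_roots_of_monic hmonic
  have hlist : (Polynomial.aeval shiftE) pC
      = ((pC.roots.toList.map (fun μ => shiftE - μ • (1 : Module.End ℂ (ℕ → ℂ))))).prod := by
    have hml : pC = (pC.roots.toList.map (fun μ => X - Polynomial.C μ)).prod := by
      conv_lhs => rw [hfact, ← Multiset.coe_toList pC.roots]
      rw [Multiset.map_coe, Multiset.prod_coe]
    conv_lhs => rw [hml]
    rw [map_list_prod (Polynomial.aeval shiftE), List.map_map]
    congr 1
    have hfun : ((Polynomial.aeval shiftE) ∘ fun μ : ℂ => X - Polynomial.C μ)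
        = fun μ : ℂ => shiftE - μ • (1 : Module.End ℂ (ℕ → ℂ)) := by
      funext μ
      simp [Function.comp, Algebra.algebraMap_eq_smul_one]
    rw [hfun]
  have hroots : ∀ μ ∈ pC.roots.toList, 1 < ‖μ‖ := by
    intro μ hμ
    exact heig μ (Polynomial.isRoot_of_mem_roots (by rwa [← Multiset.mem_toList]))
  have hzero : ∀ n ≥ N, f₀ n = 0 := by
    refine list_root_zero _ hroots f₀ hdecay N fun n hn => ?_
    have h := hCrec n hn
    rw [hlist] at h
    exact h
  refine ⟨N, fun n hn => ⟨round (x n), ?_⟩⟩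
  have h0 := hzero n hn
  have h0' : ((x n - (round (x n) : ℝ) : ℝ) : ℂ) = 0 := h0
  have h1 : x n - (round (x n) : ℝ) = 0 := by exact_mod_cast h0'
  linarith
end
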